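/- For every integer n ≥ 1, the identity Σ_{k=0}^{n} C(n+k, n−k)·Cat(k)·1^k evaluated at σ=1 satisfies: twice the n-th little Schröder number equals the n-th large Schröder number; equivalently Σ_{k=0}^{n} C(n+k, n−k)·Cat(k) = 2·Σ_{k=0}^{n} (−1)^{n+k}·C(n+k, n−k)·Cat(k)·2^k for n ≥ 1. -/

import Mathlib

open Finset

/-- The summand `C(n+k, 2k) * Catalan(k)` as a rational number. -/
private def f1 (n k : ℕ) : ℚ := ((n + k).choose (2 * k) : ℚ) * (catalan k : ℚ)

/-- The signed summand `(-2)^k * C(n+k, 2k) * Catalan(k)`. -/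
private def f2 (n k : ℕ) : ℚ := (-2) ^ k * f1 n k

private lemma f1_zero {n k : ℕ} (h : n < k) : f1 n k = 0 := by
  unfold f1
  rw [Nat.choose_eq_zero_of_lt (by omega)]
  simp

/-- The Catalan recurrence `(k+2)·Cat(k+1) = 2(2k+1)·Cat(k)` over ℚ. -/
private lemma cat_rec (k : ℕ) :
    ((k : ℚ) + 2) * (catalan (k + 1) : ℚ) = 2 * (2 * (k : ℚ) + 1) * (catalan k : ℚ) := by
  have h1 := succ_mul_catalan_eq_centralBinom (k + 1)
  have h2 := Nat.succ_mul_centralBinom_succ k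
  have h3 := succ_mul_catalan_eq_centralBinom k
  have h1' : ((k : ℚ) + 2) * (catalan (k + 1) : ℚ) = (Nat.centralBinom (k + 1) : ℚ) := by
    exact_mod_cast congrArg (Nat.cast (R := ℚ)) h1
  have h2' : ((k : ℚ) + 1) * (Nat.centralBinom (k + 1) : ℚ)
      = 2 * (2 * (k : ℚ) + 1) * (Nat.centralBinom k : ℚ) := by
    exact_mod_cast congrArg (Nat.cast (R := ℚ)) h2
  have h3' : ((k : ℚ) + 1) * (catalan k : ℚ) = (Nat.centralBinom k : ℚ) := by
    exact_mod_cast congrArg (Nat.cast (R := ℚ)) h3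
  have hk : ((k : ℚ) + 1) ≠ 0 := by positivity
  apply mul_left_cancel₀ hk
  linear_combination ((k : ℚ) + 1) * h1' + h2' - 2 * (2 * (k : ℚ) + 1) * h3'

/-- Key per-term Zeilberger identity. -/
private lemma key (m j : ℕ) :
    ((m : ℚ) + 3) * f1 (m + 2) (j + 1) - (2 * (m : ℚ) + 3) * f1 (m + 1) (j + 1)
      + (m : ℚ) * f1 m (j + 1)
    = 2 * (2 * (m : ℚ) + 3) * f1 (m + 1) j := by
  rcases lt_or_ge j m with hj | hj
  · -- generic case : m = j + d + 1
    obtain ⟨d, rfl⟩ : ∃ d, m = j + d + 1 := ⟨m - j - 1, by omega⟩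
    unfold f1
    rw [show j + d + 1 + 2 + (j + 1) = 2 * (j + 1) + (d + 2) by ring,
        show j + d + 1 + 1 + (j + 1) = 2 * (j + 1) + (d + 1) by ring,
        show j + d + 1 + (j + 1) = 2 * (j + 1) + d by ring,
        show j + d + 1 + 1 + j = 2 * j + (d + 2) by ring]
    rw [Nat.cast_add_choose (K := ℚ), Nat.cast_add_choose (K := ℚ),
        Nat.cast_add_choose (K := ℚ), Nat.cast_add_choose (K := ℚ)]
    rw [show 2 * (j + 1) + (d + 2) = (2 * j + d + 2) + 1 + 1 by ring,
        show 2 * (j + 1) + (d + 1) = (2 * j + d + 2) + 1 by ring,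
        show 2 * (j + 1) + d = 2 * j + d + 2 by ring,
        show 2 * j + (d + 2) = 2 * j + d + 2 by ring,
        show 2 * (j + 1) = 2 * j + 1 + 1 by ring,
        show d + 2 = d + 1 + 1 by ring]
    simp only [Nat.factorial_succ]
    push_cast
    have hc : (catalan (j + 1) : ℚ)
        = 2 * (2 * (j : ℚ) + 1) * (catalan j : ℚ) / ((j : ℚ) + 2) := by
      have := cat_rec j
      field_simp
      linarith [this]
    rw [hc]
    have hT : ((Nat.factorial (2 * j + d) : ℚ)) ≠ 0 := by positivity
    have hB : ((Nat.factorial (2 * j) : ℚ)) ≠ 0 := by positivity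
    have hE : ((Nat.factorial d : ℚ)) ≠ 0 := by positivity
    have hj2 : ((j : ℚ) + 2) ≠ 0 := by positivity
    field_simp
    ring
  · rcases eq_or_lt_of_le hj with hj' | hj'
    · -- j = m
      have hjm : j = m := hj'.symm
      subst hjm
      unfold f1
      rw [show j + 2 + (j + 1) = (2 * (j + 1)) + 1 by ring,
          show j + 1 + (j + 1) = 2 * (j + 1) by ring,
          show j + 1 + j = (2 * j) + 1 by ring]
      rw [Nat.choose_succ_self_right, Nat.choose_self, Nat.choose_succ_self_right,
          Nat.choose_eq_zero_of_lt (by omega)]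
      push_cast
      have := cat_rec j
      nlinarith [this]
    · rcases eq_or_lt_of_le (Nat.succ_le_of_lt hj') with hj'' | hj''
      · -- j = m + 1
        have : j = m + 1 := hj''.symm
        subst this
        unfold f1
        rw [show m + 2 + (m + 1 + 1) = 2 * (m + 1 + 1) by ring,
            show m + 1 + (m + 1) = 2 * (m + 1) by ring]
        rw [Nat.choose_self, Nat.choose_self,
            Nat.choose_eq_zero_of_lt (by omega),
            Nat.choose_eq_zero_of_lt (by omega)]
        push_cast
        have := cat_rec (m + 1)
        push_cast at this
        nlinarith [this]
      · -- j ≥ m + 2 : everything vanishes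
        rw [f1_zero (by omega), f1_zero (by omega), f1_zero (by omega), f1_zero (by omega)]
        ring

/-- The (extended-range) large Schröder sum. -/
private def S1 (n : ℕ) : ℚ := ∑ k ∈ range (n + 2), f1 n k

/-- The (extended-range) signed sum. -/
private def S2 (n : ℕ) : ℚ := ∑ k ∈ range (n + 2), f2 n k

private lemma S1_ext {n m : ℕ} (h : n + 2 ≤ m) : ∑ k ∈ range m, f1 n k = S1 n := by
  unfold S1
  exact (Finset.sum_subset (Finset.range_subset_range.2 h)
    (fun x _ hx => f1_zero (by simp only [Finset.mem_range] at hx; omega))).symm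

private lemma S2_ext {n m : ℕ} (h : n + 2 ≤ m) : ∑ k ∈ range m, f2 n k = S2 n := by
  unfold S2
  refine (Finset.sum_subset (Finset.range_subset_range.2 h) (fun x _ hx => ?_)).symm
  have : f1 n x = 0 := f1_zero (by simp only [Finset.mem_range] at hx; omega)
  unfold f2
  rw [this, mul_zero]

private lemma rec1 (m : ℕ) :
    ((m : ℚ) + 3) * S1 (m + 2)
      = 3 * (2 * (m : ℚ) + 3) * S1 (m + 1) - (m : ℚ) * S1 m := by
  set g : ℕ → ℚ := fun k => match k with
    | 0 => 0
    | (j + 1) => -2 * (2 * (m : ℚ) + 3) * f1 (m + 1) j with hg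
  have term : ∀ k, ((m : ℚ) + 3) * f1 (m + 2) k - 3 * (2 * (m : ℚ) + 3) * f1 (m + 1) k
      + (m : ℚ) * f1 m k = g (k + 1) - g k := by
    intro k
    match k with
    | 0 =>
      simp only [hg]
      unfold f1
      simp only [Nat.add_zero, Nat.mul_zero, Nat.choose_zero_right, catalan_zero]
      push_cast
      ring
    | (j + 1) =>
      simp only [hg]
      have := key m j
      ring_nf
      ring_nf at this
      linarith [this]
  have expand : ((m : ℚ) + 3) * S1 (m + 2) - 3 * (2 * (m : ℚ) + 3) * S1 (m + 1)
      + (m : ℚ) * S1 m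
      = ∑ k ∈ range (m + 4), (((m : ℚ) + 3) * f1 (m + 2) k
          - 3 * (2 * (m : ℚ) + 3) * f1 (m + 1) k + (m : ℚ) * f1 m k) := by
    rw [show S1 (m + 2) = ∑ k ∈ range (m + 4), f1 (m + 2) k from (S1_ext (by omega)).symm,
        show S1 (m + 1) = ∑ k ∈ range (m + 4), f1 (m + 1) k from (S1_ext (by omega)).symm,
        show S1 m = ∑ k ∈ range (m + 4), f1 m k from (S1_ext (by omega)).symm,
        Finset.mul_sum, Finset.mul_sum, Finset.mul_sum, ← Finset.sum_sub_distrib,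
        ← Finset.sum_add_distrib]
  rw [Finset.sum_congr rfl (fun k _ => term k), Finset.sum_range_sub g (m + 4)] at expand
  have hzero : g (m + 4) = 0 := by
    simp only [hg]
    rw [f1_zero (by omega)]
    ring
  rw [hzero] at expand
  simp only [hg] at expand
  linarith [expand]

private lemma rec2 (m : ℕ) :
    ((m : ℚ) + 3) * S2 (m + 2)
      = -3 * (2 * (m : ℚ) + 3) * S2 (m + 1) - (m : ℚ) * S2 m := by
  set g : ℕ → ℚ := fun k => match k with
    | 0 => 0
    | (j + 1) => 4 * (2 * (m : ℚ) + 3) * f2 (m + 1) j with hg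
  have term : ∀ k, ((m : ℚ) + 3) * f2 (m + 2) k + 3 * (2 * (m : ℚ) + 3) * f2 (m + 1) k
      + (m : ℚ) * f2 m k = g (k + 1) - g k := by
    intro k
    match k with
    | 0 =>
      simp only [hg]
      unfold f2 f1
      simp only [Nat.add_zero, Nat.mul_zero, Nat.choose_zero_right, catalan_zero, pow_zero]
      push_cast
      ring
    | (j + 1) =>
      simp only [hg]
      unfold f2
      linear_combination ((-2 : ℚ)) ^ (j + 1) * key m j
  have expand : ((m : ℚ) + 3) * S2 (m + 2) + 3 * (2 * (m : ℚ) + 3) * S2 (m + 1)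
      + (m : ℚ) * S2 m
      = ∑ k ∈ range (m + 4), (((m : ℚ) + 3) * f2 (m + 2) k
          + 3 * (2 * (m : ℚ) + 3) * f2 (m + 1) k + (m : ℚ) * f2 m k) := by
    rw [show S2 (m + 2) = ∑ k ∈ range (m + 4), f2 (m + 2) k from (S2_ext (by omega)).symm,
        show S2 (m + 1) = ∑ k ∈ range (m + 4), f2 (m + 1) k from (S2_ext (by omega)).symm,
        show S2 m = ∑ k ∈ range (m + 4), f2 m k from (S2_ext (by omega)).symm,
        Finset.mul_sum, Finset.mul_sum, Finset.mul_sum, ← Finset.sum_add_distrib,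
        ← Finset.sum_add_distrib]
  rw [Finset.sum_congr rfl (fun k _ => term k), Finset.sum_range_sub g (m + 4)] at expand
  have hzero : g (m + 4) = 0 := by
    simp only [hg]
    unfold f2
    rw [f1_zero (by omega)]
    ring
  rw [hzero] at expand
  simp only [hg] at expand
  linarith [expand]

private lemma main : ∀ m : ℕ,
    S1 (m + 1) = 2 * (-1 : ℚ) ^ (m + 1) * S2 (m + 1)
      ∧ S1 (m + 2) = 2 * (-1 : ℚ) ^ (m + 2) * S2 (m + 2) := by
  intro m
  induction m with
  | zero =>
    constructor
    · unfold S1 S2 f2 f1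
      simp [Finset.sum_range_succ]
      norm_num [catalan_two]
    · unfold S1 S2 f2 f1
      simp [Finset.sum_range_succ]
      norm_num [catalan_two, catalan_three]
  | succ m ih =>
    obtain ⟨h1, h2⟩ := ih
    refine ⟨h2, ?_⟩
    have hr1 := rec1 (m + 1)
    have hr2 := rec2 (m + 1)
    push_cast at hr1 hr2
    have h4 : ((m : ℚ) + 4) ≠ 0 := by positivity
    apply mul_left_cancel₀ h4
    calc ((m : ℚ) + 4) * S1 (m + 1 + 2)
        = 3 * (2 * ((m : ℚ) + 1) + 3) * S1 (m + 2) - ((m : ℚ) + 1) * S1 (m + 1) := by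
          linarith [hr1]
      _ = ((m : ℚ) + 4) * (2 * (-1 : ℚ) ^ (m + 1 + 2) * S2 (m + 1 + 2)) := by
          rw [h1, h2]
          linear_combination (2 * (-1 : ℚ) ^ (m + 2)) * hr2

/-- For n ≥ 1, Σ_{k=0}^{n} C(n+k, n-k)·Cat(k) (the large Schröder number) equals
2·Σ_{k=0}^{n} (-1)^{n+k}·C(n+k, n-k)·Cat(k)·2^k (twice the little Schröder number). -/
theorem stmt11 (n : ℕ) (hn : 1 ≤ n) :
    (∑ k ∈ Finset.range (n + 1),
        (Nat.choose (n + k) (n - k) : ℤ) * (catalan k : ℤ)) =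
    2 * ∑ k ∈ Finset.range (n + 1),
        (-1) ^ (n + k) * (Nat.choose (n + k) (n - k) : ℤ) * (catalan k : ℤ) * 2 ^ k := by
  obtain ⟨m, rfl⟩ : ∃ m, n = m + 1 := ⟨n - 1, by omega⟩
  have H := (main m).1
  have hchoose : ∀ k ∈ Finset.range (m + 2),
      (m + 1 + k).choose (m + 1 - k) = (m + 1 + k).choose (2 * k) := by
    intro k hk
    simp only [Finset.mem_range] at hk
    rw [show m + 1 - k = (m + 1 + k) - 2 * k by omega, Nat.choose_symm (by omega)]
  have hA : ((∑ k ∈ Finset.range (m + 2),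
      (Nat.choose (m + 1 + k) (m + 1 - k) : ℤ) * (catalan k : ℤ) : ℤ) : ℚ)
      = S1 (m + 1) := by
    push_cast
    unfold S1
    rw [Finset.sum_range_succ (fun k => f1 (m + 1) k) (m + 2), f1_zero (by omega), add_zero]
    refine Finset.sum_congr rfl (fun k hk => ?_)
    rw [hchoose k hk]
    unfold f1
    push_cast
    ring
  have hB : ((∑ k ∈ Finset.range (m + 2),
      (-1) ^ (m + 1 + k) * (Nat.choose (m + 1 + k) (m + 1 - k) : ℤ) * (catalan k : ℤ)
        * 2 ^ k : ℤ) : ℚ)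
      = (-1 : ℚ) ^ (m + 1) * S2 (m + 1) := by
    push_cast
    unfold S2
    rw [Finset.sum_range_succ (fun k => f2 (m + 1) k), mul_add]
    have hz : f2 (m + 1) (m + 2) = 0 := by
      unfold f2
      rw [f1_zero (by omega)]
      ring
    rw [hz, mul_zero, add_zero, Finset.mul_sum]
    refine Finset.sum_congr rfl (fun k hk => ?_)
    rw [hchoose k hk]
    unfold f2 f1
    push_cast
    rw [show ((-2) : ℚ) = (-1) * 2 by norm_num, mul_pow]
    ring
  have final : ((∑ k ∈ Finset.range (m + 2),
      (Nat.choose (m + 1 + k) (m + 1 - k) : ℤ) * (catalan k : ℤ) : ℤ) : ℚ)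
      = 2 * ((∑ k ∈ Finset.range (m + 2),
          (-1) ^ (m + 1 + k) * (Nat.choose (m + 1 + k) (m + 1 - k) : ℤ) * (catalan k : ℤ)
            * 2 ^ k : ℤ) : ℚ) := by
    rw [hA, hB]
    linear_combination H
  exact_mod_cast final
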